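/- Let X be a compact Hausdorff space. Then every extended real number u with 0 ≤ u ≤ log|X| appears as the topological entropy of some subset of X̄; that is, for every such u there exists S ⊆ X̄ with H^t_X(S) = u. -/

import Mathlib

open Set Filter Topology
open scoped ENNReal

/-- An open cover of a topological space: a family of open sets whose union is the whole space. -/
def IsOpenCover {Z : Type*} [TopologicalSpace Z] (𝒰 : Set (Set Z)) : Prop :=
  (∀ U ∈ 𝒰, IsOpen U) ∧ ⋃₀ 𝒰 = Set.univ

/-- `coverNum S 𝒰` : the minimal cardinality `N_{S/Z}(𝒰)` of a finite subfamily of `𝒰`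
whose union contains `S` (junk value `0` if there is no such finite subfamily). -/
noncomputable def coverNum {Z : Type*} (S : Set Z) (𝒰 : Set (Set Z)) : ℕ :=
  sInf {m | ∃ F : Finset (Set Z), ↑F ⊆ 𝒰 ∧ S ⊆ ⋃₀ (F : Set (Set Z)) ∧ F.card = m}

/-- The cover `𝒰̄ⁿ` of the sequence space `ℕ → Z`, consisting of the sets
`U_{i_0} × ⋯ × U_{i_{n-1}} × Z × Z × ⋯` with the `U_{i_j}` members of `𝒰`. -/
def seqCover {Z : Type*} (𝒰 : Set (Set Z)) (n : ℕ) : Set (Set (ℕ → Z)) :=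
  {V | ∃ U : ℕ → Set Z, (∀ i < n, U i ∈ 𝒰) ∧ V = {x : ℕ → Z | ∀ i < n, x i ∈ U i}}

/-- The topological entropy `H^t(S,𝒰)` of `S ⊆ Z̄ = ℕ → Z` relative to the cover `𝒰`. -/
noncomputable def entropyRel {Z : Type*} (S : Set (ℕ → Z)) (𝒰 : Set (Set Z)) : ℝ≥0∞ :=
  Filter.atTop.limsup fun n : ℕ =>
    ENNReal.ofReal ((1 / n : ℝ) * Real.log (coverNum S (seqCover 𝒰 n)))

/-- The topological entropy `H^t_Z(S)` of `S` as a subset of the sequence space `Z̄ = ℕ → Z`. -/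
noncomputable def topEntropy (Z : Type*) [TopologicalSpace Z] (S : Set (ℕ → Z)) : ℝ≥0∞ :=
  ⨆ (𝒰 : Set (Set Z)) (_ : IsOpenCover 𝒰), entropyRel S 𝒰

set_option linter.unusedSectionVars false
section Aux
variable {X : Type*} [TopologicalSpace X]

lemma coverNum_le_card {S : Set X} {𝒰 : Set (Set X)} {F : Finset (Set X)}
    (h1 : ↑F ⊆ 𝒰) (h2 : S ⊆ ⋃₀ (F : Set (Set X))) : coverNum S 𝒰 ≤ F.card :=
  Nat.sInf_le ⟨F, h1, h2, rfl⟩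

lemma le_coverNum {S : Set X} {𝒰 : Set (Set X)} {m : ℕ}
    (hne : ∃ F : Finset (Set X), ↑F ⊆ 𝒰 ∧ S ⊆ ⋃₀ (F : Set (Set X)))
    (h : ∀ F : Finset (Set X), ↑F ⊆ 𝒰 → S ⊆ ⋃₀ (F : Set (Set X)) → m ≤ F.card) :
    m ≤ coverNum S 𝒰 := by
  obtain ⟨F, h1, h2⟩ := hne
  have hmem : (coverNum S 𝒰) ∈
      {m | ∃ F : Finset (Set X), ↑F ⊆ 𝒰 ∧ S ⊆ ⋃₀ (F : Set (Set X)) ∧ F.card = m} :=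
    Nat.sInf_mem ⟨F.card, F, h1, h2, rfl⟩
  obtain ⟨G, g1, g2, g3⟩ := hmem
  exact g3 ▸ h G g1 g2

lemma isOpen_of_mem_seqCover {𝒰 : Set (Set X)} (h𝒰 : ∀ U ∈ 𝒰, IsOpen U) {n : ℕ}
    {V : Set (ℕ → X)} (hV : V ∈ seqCover 𝒰 n) : IsOpen V := by
  obtain ⟨U, hU, rfl⟩ := hV
  have : {x : ℕ → X | ∀ i < n, x i ∈ U i} = ⋂ i ∈ Finset.range n, (fun x : ℕ → X => x i) ⁻¹' U i := by
    ext x; simp [Set.mem_iInter]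
  rw [this]
  exact isOpen_biInter_finset fun i hi =>
    (h𝒰 _ (hU i (Finset.mem_range.mp hi))).preimage (continuous_apply i)

lemma exists_finite_seq_subcover [CompactSpace X] {𝒰 : Set (Set X)} (h𝒰 : IsOpenCover 𝒰)
    (n : ℕ) : ∃ F : Finset (Set (ℕ → X)), ↑F ⊆ seqCover 𝒰 n ∧
      (Set.univ : Set (ℕ → X)) ⊆ ⋃₀ (F : Set (Set (ℕ → X))) := by
  obtain ⟨hop, hcov⟩ := h𝒰
  have hU0 : ∀ p : X, ∃ U ∈ 𝒰, p ∈ U := by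
    intro p
    have : p ∈ ⋃₀ 𝒰 := hcov ▸ Set.mem_univ p
    exact this
  have hcover : (Set.univ : Set (ℕ → X)) ⊆ ⋃ V : seqCover 𝒰 n, (V : Set (ℕ → X)) := by
    intro x _
    choose f hf1 hf2 using hU0
    refine Set.mem_iUnion.mpr ⟨⟨{y : ℕ → X | ∀ i < n, y i ∈ f (x i)}, ?_⟩, ?_⟩
    · exact ⟨fun i => f (x i), fun i _ => hf1 (x i), rfl⟩
    · exact fun i _ => hf2 (x i)
  classical
  obtain ⟨t, ht⟩ := isCompact_univ.elim_finite_subcover (fun V : seqCover 𝒰 n => (V : Set (ℕ → X)))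
    (fun V => isOpen_of_mem_seqCover hop V.2) hcover
  refine ⟨t.image Subtype.val, ?_, ?_⟩
  · intro V hV
    rw [Finset.coe_image] at hV
    obtain ⟨W, _, rfl⟩ := hV
    exact W.2
  · intro x hx
    obtain ⟨V, hVt, hxV⟩ := Set.mem_iUnion₂.mp (ht hx)
    exact ⟨V, Finset.mem_coe.mpr (Finset.mem_image.mpr ⟨V, hVt, rfl⟩), hxV⟩

end Aux

section Sep
variable {X : Type*} [TopologicalSpace X] {k : ℕ}

/-- A cover of `X` by open sets each containing at most one point of `range e`. -/
def sepCover (e : Fin k → X) : Set (Set X) :=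
  Set.range (fun j : Fin k => ((Set.range e) \ {e j})ᶜ)

lemma sepCover_isOpenCover [T1Space X] (e : Fin k → X) (hk : 0 < k) :
    IsOpenCover (sepCover e) := by
  constructor
  · rintro U ⟨j, rfl⟩
    exact (((Set.finite_range e).subset Set.diff_subset).isClosed).isOpen_compl
  · ext x
    simp only [Set.mem_univ, iff_true]
    by_cases hx : x ∈ Set.range e
    · obtain ⟨j, rfl⟩ := hx
      exact ⟨_, ⟨j, rfl⟩, by simp⟩
    · exact ⟨_, ⟨⟨0, hk⟩, rfl⟩, by simp [hx]⟩

lemma sepCover_subsingleton {e : Fin k → X} (he : Function.Injective e) :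
    ∀ V ∈ sepCover e, ∀ j j' : Fin k, e j ∈ V → e j' ∈ V → j = j' := by
  rintro V ⟨m, rfl⟩ j j' hj hj'
  have h1 : j = m := by
    by_contra h
    exact hj ⟨⟨j, rfl⟩, fun hmem => h (he hmem)⟩
  have h2 : j' = m := by
    by_contra h
    exact hj' ⟨⟨j', rfl⟩, fun hmem => h (he hmem)⟩
  rw [h1, h2]

lemma card_le_coverNum [T1Space X] [CompactSpace X] {e : Fin k → X} (he : Function.Injective e)
    (hk : 0 < k) {S : Set (ℕ → X)} {n : ℕ} {W : Type*} [Fintype W] (y : W → ℕ → X)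
    (hyS : ∀ w, y w ∈ S) (hrange : ∀ w, ∀ i < n, y w i ∈ Set.range e)
    (hsep : ∀ w w', (∀ i < n, y w i = y w' i) → w = w') :
    Fintype.card W ≤ coverNum S (seqCover (sepCover e) n) := by
  classical
  apply le_coverNum
  · obtain ⟨F, h1, h2⟩ := exists_finite_seq_subcover (sepCover_isOpenCover e hk) n
    exact ⟨F, h1, (Set.subset_univ S).trans h2⟩
  · intro F hF hcov
    choose φ hφF hφmem using fun w => Set.mem_sUnion.mp (hcov (hyS w))
    have hinj : Function.Injective φ := by
      intro w w' hww
      obtain ⟨U, hU, hVeq⟩ := hF (hφF w)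
      apply hsep
      intro i hi
      have h1 : y w i ∈ U i := by
        have := hφmem w; rw [hVeq] at this; exact this i hi
      have h2 : y w' i ∈ U i := by
        have := hφmem w'; rw [← hww, hVeq] at this; exact this i hi
      obtain ⟨j, hj⟩ := hrange w i hi
      obtain ⟨j', hj'⟩ := hrange w' i hi
      rw [← hj, ← hj']
      exact congrArg e (sepCover_subsingleton he _ (hU i hi) j j' (hj ▸ h1) (hj' ▸ h2))
    calc Fintype.card W = (Finset.univ.image φ).card :=
          (Finset.card_image_of_injective _ hinj).symm
      _ ≤ F.card := Finset.card_le_card (fun V hV => by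
          obtain ⟨w, _, rfl⟩ := Finset.mem_image.mp hV
          exact Finset.mem_coe.mp (hφF w))

end Sep

section Words
variable {X : Type*} [TopologicalSpace X] {k : ℕ}

/-- Sequences valued in `range e`, forced to equal `e z` off `A`. -/
def denSet (e : Fin k → X) (A : ℕ → Prop) (z : Fin k) : Set (ℕ → X) :=
  {x | ∃ w : ℕ → Fin k, (∀ i, ¬ A i → w i = z) ∧ ∀ i, x i = e (w i)}

omit [TopologicalSpace X] in
lemma card_wordType (A : ℕ → Prop) [DecidablePred A] (n k : ℕ) :
    Fintype.card ({i : Fin n // A i.1} → Fin k) = k ^ ((Finset.range n).filter A).card := by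
  classical
  rw [Fintype.card_fun, Fintype.card_subtype, Fintype.card_fin]
  congr 1
  apply Finset.card_bij (fun (i : Fin n) _ => i.1)
  · intro i hi
    exact Finset.mem_filter.mpr ⟨Finset.mem_range.mpr i.2, (Finset.mem_filter.mp hi).2⟩
  · intro i _ j _ h
    exact Fin.val_injective h
  · intro m hm
    obtain ⟨hmr, hmA⟩ := Finset.mem_filter.mp hm
    exact ⟨⟨m, Finset.mem_range.mp hmr⟩, Finset.mem_filter.mpr ⟨Finset.mem_univ _, hmA⟩, rfl⟩

lemma coverNum_denSet_le {e : Fin k → X} {z : Fin k} {A : ℕ → Prop} [DecidablePred A]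
    {𝒰 : Set (Set X)} (h𝒰 : IsOpenCover 𝒰) (n : ℕ) :
    coverNum (denSet e A z) (seqCover 𝒰 n) ≤ k ^ ((Finset.range n).filter A).card := by
  classical
  obtain ⟨hop, hcov⟩ := h𝒰
  have hg : ∀ j : Fin k, ∃ U ∈ 𝒰, e j ∈ U := fun j =>
    (Set.mem_sUnion.mp (hcov ▸ Set.mem_univ (e j)))
  choose g hg1 hg2 using hg
  set W := ({i : Fin n // A i.1} → Fin k) with hW
  let Uw : W → ℕ → Set X := fun w i => if h : (i < n) ∧ A i then g (w ⟨⟨i, h.1⟩, h.2⟩) else g z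
  let cyl : W → Set (ℕ → X) := fun w => {x | ∀ i < n, x i ∈ Uw w i}
  have hsub : ↑(Finset.univ.image cyl) ⊆ seqCover 𝒰 n := by
    rintro V hV
    rw [Finset.coe_image] at hV
    obtain ⟨w, _, rfl⟩ := hV
    refine ⟨Uw w, fun i _ => ?_, rfl⟩
    by_cases h : (i < n) ∧ A i
    · simp only [Uw, dif_pos h]; exact hg1 _
    · simp only [Uw, dif_neg h]; exact hg1 _
  have hcovS : denSet e A z ⊆ ⋃₀ ↑(Finset.univ.image cyl) := by
    rintro x ⟨w', hw'0, hw'⟩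
    refine ⟨cyl (fun i => w' i.1.1), Finset.mem_coe.mpr
      (Finset.mem_image.mpr ⟨fun i => w' i.1.1, Finset.mem_univ _, rfl⟩), ?_⟩
    intro i hi
    rw [hw' i]
    by_cases hA : A i
    · have : Uw (fun i => w' i.1.1) i = g (w' i) := by simp [Uw, hi, hA]
      rw [this]; exact hg2 _
    · have h1 : Uw (fun i => w' i.1.1) i = g z := by simp [Uw, hA]
      rw [h1, hw'0 i hA]
      exact hg2 z
  calc coverNum (denSet e A z) (seqCover 𝒰 n) ≤ (Finset.univ.image cyl).card :=
        coverNum_le_card hsub hcovS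
    _ ≤ (Finset.univ : Finset W).card := Finset.card_image_le
    _ = Fintype.card W := Finset.card_univ
    _ = k ^ ((Finset.range n).filter A).card := card_wordType A n k

lemma card_le_coverNum_denSet [T1Space X] [CompactSpace X] {e : Fin k → X}
    (he : Function.Injective e) (hk : 0 < k) (z : Fin k) (A : ℕ → Prop) [DecidablePred A]
    (n : ℕ) :
    k ^ ((Finset.range n).filter A).card ≤ coverNum (denSet e A z) (seqCover (sepCover e) n) := by
  rw [← card_wordType A n k]
  apply card_le_coverNum he hk
    (y := fun (w : {i : Fin n // A i.1} → Fin k) i =>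
      e (if h : (i < n) ∧ A i then w ⟨⟨i, h.1⟩, h.2⟩ else z))
  · intro w
    exact ⟨fun i => if h : (i < n) ∧ A i then w ⟨⟨i, h.1⟩, h.2⟩ else z,
      fun i hA => by simp [hA], fun i => rfl⟩
  · intro w i _
    exact ⟨_, rfl⟩
  · intro w w' hww
    funext i
    have h : (i.1.1 < n) ∧ A i.1.1 := ⟨i.1.2, i.2⟩
    have h2 := hww i.1.1 i.1.2
    simp only [dif_pos h] at h2
    exact he h2

lemma card_le_coverNum_univ [T1Space X] [CompactSpace X] {e : Fin k → X}
    (he : Function.Injective e) (hk : 0 < k) (n : ℕ) :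
    k ^ n ≤ coverNum (Set.univ : Set (ℕ → X)) (seqCover (sepCover e) n) := by
  classical
  have hsep : ∀ w w' : Fin n → Fin k,
      (∀ i < n, (fun (w : Fin n → Fin k) i => e (if h : i < n then w ⟨i, h⟩ else ⟨0, hk⟩)) w i
        = (fun (w : Fin n → Fin k) i => e (if h : i < n then w ⟨i, h⟩ else ⟨0, hk⟩)) w' i)
      → w = w' := by
    intro w w' hww
    funext i
    have h2 := hww i.1 i.2
    simp only [dif_pos i.2] at h2
    exact he h2
  have := card_le_coverNum (S := (Set.univ : Set (ℕ → X))) (n := n) he hk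
    (y := fun (w : Fin n → Fin k) i => e (if h : i < n then w ⟨i, h⟩ else ⟨0, hk⟩))
    (fun w => Set.mem_univ _) (fun w i _ => ⟨_, rfl⟩) hsep
  simpa [Fintype.card_fun] using this

end Words

section Density

/-- Positions where `⌊d·n⌋` increments. -/
def denA (d : ℝ) : ℕ → Prop := fun i => ⌊d * ((i : ℝ) + 1)⌋₊ ≠ ⌊d * (i : ℝ)⌋₊

lemma denA_count {d : ℝ} (hd0 : 0 ≤ d) (hd1 : d ≤ 1) [DecidablePred (denA d)] (n : ℕ) :
    ((Finset.range n).filter (denA d)).card = ⌊d * (n : ℝ)⌋₊ := by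
  induction n with
  | zero => simp
  | succ n ih =>
    have hn0 : (0:ℝ) ≤ d * n := by positivity
    have hmono : ⌊d * (n : ℝ)⌋₊ ≤ ⌊d * ((n : ℝ) + 1)⌋₊ :=
      Nat.floor_le_floor (by nlinarith)
    have hup : ⌊d * ((n : ℝ) + 1)⌋₊ ≤ ⌊d * (n : ℝ)⌋₊ + 1 := by
      have h1 : d * ((n : ℝ) + 1) ≤ d * n + 1 := by nlinarith
      calc ⌊d * ((n : ℝ) + 1)⌋₊ ≤ ⌊d * (n : ℝ) + 1⌋₊ := Nat.floor_le_floor h1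
        _ = ⌊d * (n : ℝ)⌋₊ + 1 := Nat.floor_add_one hn0
    have hcast : d * ((n + 1 : ℕ) : ℝ) = d * ((n : ℝ) + 1) := by push_cast; ring
    rw [Finset.range_add_one, Finset.filter_insert, hcast]
    by_cases hA : denA d n
    · rw [if_pos hA, Finset.card_insert_of_notMem (by simp), ih]
      have hne : ⌊d * ((n : ℝ) + 1)⌋₊ ≠ ⌊d * (n : ℝ)⌋₊ := hA
      omega
    · rw [if_neg hA, ih]
      have heq : ¬ (⌊d * ((n : ℝ) + 1)⌋₊ ≠ ⌊d * (n : ℝ)⌋₊) := hA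
      omega

lemma denA_tendsto {d : ℝ} (hd0 : 0 ≤ d) :
    Filter.Tendsto (fun n : ℕ => (⌊d * (n : ℝ)⌋₊ : ℝ) / n) Filter.atTop (nhds d) := by
  have hlow : Filter.Tendsto (fun n : ℕ => d - 1 / (n : ℝ)) Filter.atTop (nhds d) := by
    simpa using tendsto_const_nhds.sub (tendsto_one_div_atTop_nhds_zero_nat (𝕜 := ℝ))
  apply tendsto_of_tendsto_of_tendsto_of_le_of_le' hlow tendsto_const_nhds
  · filter_upwards [Filter.eventually_ge_atTop 1] with n hn
    have hnpos : (0:ℝ) < n := by exact_mod_cast hn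
    have h1 : d * n - 1 ≤ (⌊d * (n : ℝ)⌋₊ : ℝ) := (Nat.sub_one_lt_floor _).le
    have h2 : d - 1 / (n : ℝ) = (d * n - 1) / n := by field_simp
    rw [h2]
    gcongr
  · filter_upwards [Filter.eventually_ge_atTop 1] with n hn
    have hnpos : (0:ℝ) < n := by exact_mod_cast hn
    have h1 : (⌊d * (n : ℝ)⌋₊ : ℝ) ≤ d * n := Nat.floor_le (by positivity)
    calc (⌊d * (n : ℝ)⌋₊ : ℝ) / n ≤ (d * n) / n := by gcongr
      _ = d := by field_simp

end Density

section Entropy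
variable {Z : Type*}

lemma entropyRel_le_of_coverNum_le {S : Set (ℕ → Z)} {𝒰 : Set (Set Z)} {K : ℕ → ℕ}
    (hK : ∀ n, 1 ≤ K n) (h : ∀ n, coverNum S (seqCover 𝒰 n) ≤ K n) :
    entropyRel S 𝒰 ≤
      Filter.atTop.limsup (fun n : ℕ => ENNReal.ofReal ((1 / n : ℝ) * Real.log (K n))) := by
  refine Filter.limsup_le_limsup (Filter.Eventually.of_forall ?_) isCobounded_le_of_bot
    isBounded_le_of_top
  intro n
  apply ENNReal.ofReal_le_ofReal
  apply mul_le_mul_of_nonneg_left _ (by positivity)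
  rcases Nat.eq_zero_or_pos (coverNum S (seqCover 𝒰 n)) with h0 | hpos
  · rw [h0]
    simpa using Real.log_nonneg (by exact_mod_cast hK n)
  · exact Real.log_le_log (by exact_mod_cast hpos) (by exact_mod_cast h n)

lemma le_entropyRel_of_le_coverNum {S : Set (ℕ → Z)} {𝒰 : Set (Set Z)} {K : ℕ → ℕ}
    (hK : ∀ n, 1 ≤ K n) (h : ∀ n, K n ≤ coverNum S (seqCover 𝒰 n)) :
    Filter.atTop.limsup (fun n : ℕ => ENNReal.ofReal ((1 / n : ℝ) * Real.log (K n)))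
      ≤ entropyRel S 𝒰 := by
  refine Filter.limsup_le_limsup (Filter.Eventually.of_forall ?_) isCobounded_le_of_bot
    isBounded_le_of_top
  intro n
  apply ENNReal.ofReal_le_ofReal
  apply mul_le_mul_of_nonneg_left _ (by positivity)
  exact Real.log_le_log (by exact_mod_cast hK n) (by exact_mod_cast h n)

lemma limsup_ofReal_eq {a : ℕ → ℝ} {r : ℝ} (h : Filter.Tendsto a Filter.atTop (nhds r)) :
    Filter.atTop.limsup (fun n => ENNReal.ofReal (a n)) = ENNReal.ofReal r :=
  ((ENNReal.continuous_ofReal.tendsto r).comp h).limsup_eq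

lemma tendsto_main {k : ℕ} (hk : 1 ≤ k) {d : ℝ} (hd0 : 0 ≤ d) :
    Filter.Tendsto (fun n : ℕ => (1 / (n : ℝ)) * Real.log ((k ^ ⌊d * (n : ℝ)⌋₊ : ℕ) : ℝ))
      Filter.atTop (nhds (d * Real.log k)) := by
  have heq : ∀ n : ℕ, (1 / (n : ℝ)) * Real.log ((k ^ ⌊d * (n : ℝ)⌋₊ : ℕ) : ℝ)
      = ((⌊d * (n : ℝ)⌋₊ : ℝ) / n) * Real.log k := by
    intro n
    rw [Nat.cast_pow, Real.log_pow]
    ring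
  simp only [heq]
  simpa using (denA_tendsto hd0).mul_const (Real.log k)

lemma topEntropy_empty [TopologicalSpace Z] : topEntropy Z (∅ : Set (ℕ → Z)) = 0 := by
  apply le_antisymm _ zero_le
  apply iSup₂_le
  intro 𝒰 _
  have hz : ∀ n, coverNum (∅ : Set (ℕ → Z)) (seqCover 𝒰 n) = 0 := by
    intro n
    have := coverNum_le_card (S := (∅ : Set (ℕ → Z))) (𝒰 := seqCover 𝒰 n)
      (F := (∅ : Finset (Set (ℕ → Z)))) (by simp) (by simp)
    simpa using this
  have heq : (fun n : ℕ => ENNReal.ofReal ((1 / n : ℝ) *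
      Real.log (coverNum (∅ : Set (ℕ → Z)) (seqCover 𝒰 n)))) = fun _ => (0 : ℝ≥0∞) := by
    funext n
    rw [hz n]
    simp
  unfold entropyRel
  rw [heq, Filter.limsup_const]

end Entropy

open scoped Classical in
theorem topEntropy_surjects_onto_interval {X : Type*} [TopologicalSpace X] [CompactSpace X]
    [T2Space X] (u : ℝ≥0∞)
    (hu : u ≤ if Finite X then ENNReal.ofReal (Real.log (Nat.card X)) else ⊤) :
    ∃ S : Set (ℕ → X), topEntropy X S = u := by
  by_cases hu0 : u = 0
  · exact ⟨∅, by rw [topEntropy_empty, hu0]⟩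
  by_cases hutop : u = ⊤
  · -- `u = ⊤` : then `X` is infinite, and `S = univ` works.
    have hXinf : Infinite X := by
      rw [← not_finite_iff_infinite]
      intro hfin
      rw [if_pos hfin, hutop, top_le_iff] at hu
      exact ENNReal.ofReal_ne_top hu
    refine ⟨Set.univ, ?_⟩
    rw [hutop, eq_top_iff]
    have key : ∀ k : ℕ, 0 < k → ENNReal.ofReal (Real.log k) ≤ topEntropy X Set.univ := by
      intro k hk
      set e : Fin k → X := fun j => Infinite.natEmbedding X j.1 with he_def
      have he : Function.Injective e := fun a b hab =>
        Fin.val_injective ((Infinite.natEmbedding X).injective hab)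
      have ht : Filter.Tendsto (fun n : ℕ => (1 / (n : ℝ)) * Real.log ((k ^ n : ℕ) : ℝ))
          Filter.atTop (nhds (Real.log k)) := by
        apply Filter.Tendsto.congr' _ (tendsto_const_nhds (x := Real.log k))
        filter_upwards [Filter.eventually_ge_atTop 1] with n hn
        have hn0 : (n : ℝ) ≠ 0 := by positivity
        rw [Nat.cast_pow, Real.log_pow]
        field_simp
      calc ENNReal.ofReal (Real.log k)
          = Filter.atTop.limsup
            (fun n : ℕ => ENNReal.ofReal ((1 / n : ℝ) * Real.log ((k ^ n : ℕ) : ℝ))) :=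
            (limsup_ofReal_eq ht).symm
        _ ≤ entropyRel Set.univ (sepCover e) :=
            le_entropyRel_of_le_coverNum (fun n => Nat.one_le_pow _ _ hk)
              (fun n => card_le_coverNum_univ he hk n)
        _ ≤ topEntropy X Set.univ :=
            le_iSup₂ (f := fun 𝒰 (_ : IsOpenCover 𝒰) => entropyRel (Set.univ : Set (ℕ → X)) 𝒰)
              (sepCover e) (sepCover_isOpenCover e hk)
    have hlim : Filter.Tendsto (fun k : ℕ => ENNReal.ofReal (Real.log k)) Filter.atTop (nhds ⊤) :=
      ENNReal.tendsto_ofReal_atTop.comp (Real.tendsto_log_atTop.comp tendsto_natCast_atTop_atTop)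
    exact le_of_tendsto hlim (Filter.eventually_atTop.mpr ⟨1, fun k hk => key k hk⟩)
  · -- `0 < u < ⊤`
    set r := u.toReal with hrdef
    have hr0 : 0 < r := ENNReal.toReal_pos hu0 hutop
    obtain ⟨k, hk1, e, he, hrk⟩ : ∃ k : ℕ, 0 < k ∧ ∃ e : Fin k → X,
        Function.Injective e ∧ r ≤ Real.log k := by
      by_cases hfin : Finite X
      · have hne : Nonempty X := by
          by_contra hne
          rw [not_nonempty_iff] at hne
          rw [if_pos hfin] at hu
          rw [Nat.card_of_isEmpty] at hu
          simp only [Nat.cast_zero, Real.log_zero, ENNReal.ofReal_zero, le_zero_iff] at hu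
          exact hu0 hu
        have hpos : 0 < Nat.card X := Nat.card_pos
        refine ⟨Nat.card X, hpos, (Finite.equivFinOfCardEq rfl).symm,
          (Finite.equivFinOfCardEq rfl).symm.injective, ?_⟩
        rw [if_pos hfin] at hu
        have h1 : r ≤ (ENNReal.ofReal (Real.log (Nat.card X))).toReal :=
          ENNReal.toReal_mono ENNReal.ofReal_ne_top hu
        rwa [ENNReal.toReal_ofReal (Real.log_natCast_nonneg _)] at h1
      · haveI : Infinite X := not_finite_iff_infinite.mp hfin
        set k := ⌈Real.exp r⌉₊
        have hk0 : 0 < k := Nat.ceil_pos.mpr (Real.exp_pos r)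
        refine ⟨k, hk0, fun j => Infinite.natEmbedding X j.1,
          fun a b hab => Fin.val_injective ((Infinite.natEmbedding X).injective hab), ?_⟩
        have h1 : Real.exp r ≤ (k : ℝ) := Nat.le_ceil _
        calc r = Real.log (Real.exp r) := (Real.log_exp r).symm
          _ ≤ Real.log k := Real.log_le_log (Real.exp_pos r) h1
    set d := r / Real.log (k : ℝ) with hddef
    have hlogk : 0 < Real.log (k : ℝ) := lt_of_lt_of_le hr0 hrk
    have hd0 : 0 < d := div_pos hr0 hlogk
    have hd1 : d ≤ 1 := (div_le_one hlogk).mpr hrk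
    letI : DecidablePred (denA d) := Classical.decPred _
    set S := denSet e (denA d) ⟨0, hk1⟩ with hSdef
    refine ⟨S, ?_⟩
    have hKcount : ∀ n, ((Finset.range n).filter (denA d)).card = ⌊d * (n : ℝ)⌋₊ :=
      denA_count hd0.le hd1
    have htend := tendsto_main hk1 hd0.le
    have hdlog : d * Real.log (k : ℝ) = r := div_mul_cancel₀ r hlogk.ne'
    have hlimsup : Filter.atTop.limsup (fun n : ℕ =>
        ENNReal.ofReal ((1 / (n : ℝ)) * Real.log ((k ^ ⌊d * (n : ℝ)⌋₊ : ℕ) : ℝ))) = u := by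
      rw [limsup_ofReal_eq htend, hdlog, ENNReal.ofReal_toReal hutop]
    have hub : ∀ 𝒰 : Set (Set X), IsOpenCover 𝒰 → entropyRel S 𝒰 ≤ u := by
      intro 𝒰 h𝒰
      rw [← hlimsup]
      exact entropyRel_le_of_coverNum_le (fun n => Nat.one_le_pow _ _ hk1)
        (fun n => by rw [← hKcount n]; exact coverNum_denSet_le h𝒰 n)
    have hlb : u ≤ entropyRel S (sepCover e) := by
      rw [← hlimsup]
      exact le_entropyRel_of_le_coverNum (fun n => Nat.one_le_pow _ _ hk1)
        (fun n => by rw [← hKcount n]; exact card_le_coverNum_denSet he hk1 _ _ n)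
    exact le_antisymm (iSup₂_le hub)
      (hlb.trans (le_iSup₂ (f := fun 𝒰 (_ : IsOpenCover 𝒰) => entropyRel S 𝒰)
        (sepCover e) (sepCover_isOpenCover e hk1)))
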